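/- Let v_1,...,v_n be orthonormal, p a pmf on subsets of {1,...,n}, and let θ be any code that on input S outputs the reconstruction x̂ = Σ_{r=1}^m a_r(S) v_{ℓ(r)} for binary activations a_r(S) ∈ {0,1} and an assignment ℓ : {1,...,m} → {1,...,n}. Define the clipped code θ' by a'_r(S) = a_r(S)·1{ℓ(r) ∈ S}. Then R(θ') ≤ R(θ) and D(θ') ≤ D(θ), where R is the expected number of active latents and D the expected squared error. -/
import Mathlib

section Aux

variable {n m : ℕ} {E : Type*} [NormedAddCommGroup E] [InnerProductSpace ℝ E]

private lemma regroup (v : Fin n → E) (ℓmap : Fin m → Fin n)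
    (S : Finset (Fin n)) (f : Fin m → ℝ) :
    (∑ ℓ ∈ S, v ℓ) - ∑ r : Fin m, f r • v (ℓmap r) =
      ∑ ℓ : Fin n,
        ((if ℓ ∈ S then (1 : ℝ) else 0) -
          ∑ r : Fin m, (if ℓmap r = ℓ then f r else 0)) • v ℓ := by
  simp only [sub_smul, Finset.sum_sub_distrib]
  congr 1
  · simp [ite_smul, Finset.sum_ite_mem]
  · refine Eq.symm ?_
    calc ∑ x : Fin n, (∑ r : Fin m, if ℓmap r = x then f r else 0) • v x
        = ∑ x : Fin n, ∑ r : Fin m, (if ℓmap r = x then f r • v x else 0) := by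
          refine Finset.sum_congr rfl fun x _ => ?_
          rw [Finset.sum_smul]
          exact Finset.sum_congr rfl fun r _ => by split <;> simp
      _ = ∑ r : Fin m, ∑ x : Fin n, (if ℓmap r = x then f r • v x else 0) :=
          Finset.sum_comm
      _ = ∑ r : Fin m, f r • v (ℓmap r) := by
          refine Finset.sum_congr rfl fun r _ => ?_
          simp

private lemma norm_sq_coeff (v : Fin n → E) (hv : Orthonormal ℝ v) (c : Fin n → ℝ) :
    ‖∑ ℓ : Fin n, c ℓ • v ℓ‖ ^ 2 = ∑ ℓ : Fin n, c ℓ ^ 2 := by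
  rw [← real_inner_self_eq_norm_sq, hv.inner_sum]
  simp [sq]

end Aux

/-- clipping: for a code with `m` binary latents, latent `r`
writing `v (ℓmap r)` when active, suppressing every latent whose assigned
concept is absent from the input (`a' S r = a S r ∧ ℓmap r ∈ S`) weakly
decreases both the expected number of active latents (rate) and the expected
squared reconstruction error (distortion). -/
theorem clipping_weakly_dominates
    {n m : ℕ} {E : Type*} [NormedAddCommGroup E] [InnerProductSpace ℝ E]
    (v : Fin n → E) (hv : Orthonormal ℝ v)
    (p : Finset (Fin n) → ℝ) (hp0 : ∀ S, 0 ≤ p S)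
    (hp1 : ∑ S : Finset (Fin n), p S = 1)
    (ℓmap : Fin m → Fin n) (a : Finset (Fin n) → Fin m → Bool) :
    (∑ S : Finset (Fin n),
        p S * ∑ r : Fin m, (if a S r ∧ ℓmap r ∈ S then (1 : ℝ) else 0)) ≤
      (∑ S : Finset (Fin n), p S * ∑ r : Fin m, (if a S r then (1 : ℝ) else 0)) ∧
    (∑ S : Finset (Fin n),
        p S * ‖(∑ ℓ ∈ S, v ℓ) -
          ∑ r : Fin m, (if a S r ∧ ℓmap r ∈ S then (1 : ℝ) else 0) • v (ℓmap r)‖ ^ 2) ≤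
      (∑ S : Finset (Fin n),
        p S * ‖(∑ ℓ ∈ S, v ℓ) -
          ∑ r : Fin m, (if a S r then (1 : ℝ) else 0) • v (ℓmap r)‖ ^ 2) := by
  constructor
  · refine Finset.sum_le_sum fun S _ => ?_
    refine mul_le_mul_of_nonneg_left (Finset.sum_le_sum fun r _ => ?_) (hp0 S)
    by_cases h : a S r ∧ ℓmap r ∈ S <;> by_cases h' : (a S r : Prop) <;>
      simp_all <;> norm_num
  · refine Finset.sum_le_sum fun S _ => ?_
    refine mul_le_mul_of_nonneg_left ?_ (hp0 S)
    rw [regroup v ℓmap S, regroup v ℓmap S, norm_sq_coeff v hv, norm_sq_coeff v hv]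
    refine Finset.sum_le_sum fun ℓ _ => ?_
    by_cases hmem : ℓ ∈ S
    · have : ∀ r : Fin m,
          (if ℓmap r = ℓ then (if a S r ∧ ℓmap r ∈ S then (1:ℝ) else 0) else 0) =
          (if ℓmap r = ℓ then (if a S r then (1:ℝ) else 0) else 0) := by
        intro r
        by_cases he : ℓmap r = ℓ
        · subst he; simp [hmem]
        · simp [he]
      simp only [this]
      exact le_rfl
    · have h1 : ∀ r : Fin m,
          (if ℓmap r = ℓ then (if a S r ∧ ℓmap r ∈ S then (1:ℝ) else 0) else 0) = 0 := by
        intro r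
        by_cases he : ℓmap r = ℓ
        · subst he; simp [hmem]
        · simp [he]
      have hz : ((if ℓ ∈ S then (1:ℝ) else 0) -
          ∑ r : Fin m, (if ℓmap r = ℓ then (if a S r ∧ ℓmap r ∈ S then (1:ℝ) else 0) else 0)) ^ 2 = 0 := by
        simp [h1, hmem]
      rw [hz]
      exact sq_nonneg _
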